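/- Let (X, 𝒰) be a uniform space and f : (X, 𝒰) → (X, 𝒰) continuous. Then the Zadeh extension f̂ : (ℱ(X), 𝒰_S) → (ℱ(X), 𝒰_S) is continuous, where 𝒰_S is the sendograph uniformity. -/

import Mathlib

open Set Filter Topology
open scoped Uniformity

/-- The α-cut of a fuzzy set: `{x | α ≤ u x}` for `α ≠ 0`, and the support
(closure of `{x | 0 < u x}`) for `α = 0`. -/
noncomputable def fuzzyCut {X : Type*} [TopologicalSpace X] (u : X → ℝ) (α : ℝ) : Set X :=
  if α = 0 then closure {x | 0 < u x} else {x | α ≤ u x}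

/-- `u` belongs to `ℱ(X)`: a normal upper semicontinuous `[0,1]`-valued fuzzy set
with compact support. -/
structure IsFuzzySet {X : Type*} [TopologicalSpace X] (u : X → ℝ) : Prop where
  mem_Icc : ∀ x, u x ∈ Set.Icc (0:ℝ) 1
  usc : UpperSemicontinuous u
  normal : ∃ x, u x = 1
  compact_supp : IsCompact (closure {x | 0 < u x})

/-- The Zadeh extension of `f`: `x ↦ sup {u z : f z = x}` (and `0` when the
preimage is empty, since `sSup ∅ = 0` in `ℝ`). -/
noncomputable def zadeh {X : Type*} (f : X → X) (u : X → ℝ) : X → ℝ :=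
  fun x => sSup (u '' (f ⁻¹' {x}))

/-- `W(A) = ⋃ a ∈ A, W(a)` where `W(a) = {y | (a, y) ∈ W}`. -/
def ballImage {Y : Type*} (W : Set (Y × Y)) (A : Set Y) : Set Y :=
  {y | ∃ a ∈ A, (a, y) ∈ W}

/-- The Hausdorff entourage relation `𝒦[W]`: `(A,B) ∈ 𝒦[W]` iff `A ⊆ W(B)` and `B ⊆ W(A)`. -/
def KRel {Y : Type*} (W : Set (Y × Y)) (A B : Set Y) : Prop :=
  A ⊆ ballImage W B ∧ B ⊆ ballImage W A

/-- The level-wise entourage relation `ℱ[W]`: `(u_α, v_α) ∈ 𝒦[W]` for all `α ∈ [0,1]`. -/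
def FRel {X : Type*} [TopologicalSpace X] (W : Set (X × X)) (u v : X → ℝ) : Prop :=
  ∀ α ∈ Set.Icc (0:ℝ) 1, KRel W (fuzzyCut u α) (fuzzyCut v α)

/-- The Skorokhod entourage relation `G[W, ε]`: there is an increasing homeomorphism `t`
of `[0,1]` with `‖t‖ < ε` and `(u_α, v_{t α}) ∈ 𝒦[W]` for all `α ∈ [0,1]`. -/
def SkoRel {X : Type*} [TopologicalSpace X] (W : Set (X × X)) (ε : ℝ) (u v : X → ℝ) : Prop :=
  ∃ t : ℝ → ℝ, StrictMonoOn t (Set.Icc 0 1) ∧ t 0 = 0 ∧ t 1 = 1 ∧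
    Set.MapsTo t (Set.Icc 0 1) (Set.Icc 0 1) ∧ Set.SurjOn t (Set.Icc 0 1) (Set.Icc 0 1) ∧
    (∀ α ∈ Set.Icc (0:ℝ) 1, |t α - α| < ε) ∧
    (∀ α ∈ Set.Icc (0:ℝ) 1, KRel W (fuzzyCut u α) (fuzzyCut v (t α)))

/-- The sendograph of `u`: `end(u) ∩ (u₀ × [0,1])`. -/
noncomputable def send {X : Type*} [TopologicalSpace X] (u : X → ℝ) : Set (X × ℝ) :=
  {p | p.1 ∈ fuzzyCut u 0 ∧ p.2 ∈ Set.Icc (0:ℝ) 1 ∧ p.2 ≤ u p.1}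

/-- The product entourage `U × V_ε` on `X × [0,1]`. -/
def prodEnt {X : Type*} (U : Set (X × X)) (ε : ℝ) : Set ((X × ℝ) × (X × ℝ)) :=
  {p | (p.1.1, p.2.1) ∈ U ∧ |p.1.2 - p.2.2| < ε}

/-- The sendograph entourage relation `S[U, ε]`. -/
noncomputable def SendRel {X : Type*} [TopologicalSpace X] (U : Set (X × X)) (ε : ℝ)
    (u v : X → ℝ) : Prop :=
  KRel (prodEnt U ε) (send u) (send v)

/-- `u_{α⁺} = closure (⋃ β ∈ (α, 1], u_β)`, the right limit of the level map. -/
noncomputable def cutPlus {X : Type*} [TopologicalSpace X] (u : X → ℝ) (α : ℝ) : Set X :=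
  closure (⋃ β ∈ Set.Ioc α 1, fuzzyCut u β)

/-- `B` belongs to the Vietoris basic open set `⟨V 0, …, V (k-1)⟩`. -/
def inVietoris {Y : Type*} (B : Set Y) (k : ℕ) (V : Fin k → Set Y) : Prop :=
  B ⊆ (⋃ i, V i) ∧ ∀ i, (B ∩ V i).Nonempty

section aux
variable {X : Type*} [TopologicalSpace X] {f : X → X}

lemma zadeh_bddAbove (u : X → ℝ) (hu : ∀ x, u x ∈ Set.Icc (0:ℝ) 1) (x : X) :
    BddAbove (u '' (f ⁻¹' {x})) :=
  ⟨1, by rintro s ⟨z, _, rfl⟩; exact (hu z).2⟩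

lemma le_zadeh (u : X → ℝ) (hu : ∀ x, u x ∈ Set.Icc (0:ℝ) 1) (z : X) :
    u z ≤ zadeh f u (f z) :=
  le_csSup (zadeh_bddAbove u hu (f z)) ⟨z, rfl, rfl⟩

lemma image_supp_subset (u : X → ℝ) (hu : ∀ x, u x ∈ Set.Icc (0:ℝ) 1) :
    f '' {z | 0 < u z} ⊆ {x | 0 < zadeh f u x} := by
  rintro x ⟨z, hz, rfl⟩
  exact lt_of_lt_of_le hz (le_zadeh u hu z)

lemma image_send_subset (hf : Continuous f) (u : X → ℝ) (hu : IsFuzzySet u) :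
    Prod.map f id '' send u ⊆ send (zadeh f u) := by
  rintro p ⟨⟨a, t⟩, ⟨ha, ht, hle⟩, rfl⟩
  refine ⟨?_, ht, hle.trans (le_zadeh u hu.mem_Icc a)⟩
  have h1 : f a ∈ closure (f '' {z | 0 < u z}) :=
    image_closure_subset_closure_image hf ⟨a, by simpa [fuzzyCut] using ha, rfl⟩
  simp only [fuzzyCut, if_pos rfl]
  exact closure_mono (image_supp_subset u hu.mem_Icc) h1

lemma exists_of_pos_zadeh (u : X → ℝ) {x : X} {t : ℝ} (h0 : 0 ≤ t)
    (ht : t < zadeh f u x) : ∃ z, f z = x ∧ t < u z := by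
  have hne : (u '' (f ⁻¹' {x})).Nonempty := by
    by_contra hc
    rw [not_nonempty_iff_eq_empty] at hc
    rw [zadeh, hc, Real.sSup_empty] at ht
    linarith
  obtain ⟨s, ⟨z, hz, rfl⟩, hs⟩ := exists_lt_of_lt_csSup hne ht
  exact ⟨z, hz, hs⟩

lemma send_zadeh_subset (u : X → ℝ) (hu : IsFuzzySet u) :
    send (zadeh f u) ⊆ closure (Prod.map f id '' send u) := by
  rintro ⟨x, t⟩ ⟨hx, ht, hle⟩
  have hxc : x ∈ closure {x' | 0 < zadeh f u x'} := by
    simpa [fuzzyCut] using hx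
  rcases eq_or_lt_of_le ht.1 with h0 | h0
  · -- t = 0
    have hsub : {x' | 0 < zadeh f u x'} ×ˢ ({(0:ℝ)} : Set ℝ) ⊆ Prod.map f id '' send u := by
      rintro ⟨x', s⟩ ⟨hx', hs⟩
      obtain ⟨z, hfz, hz⟩ := exists_of_pos_zadeh u le_rfl hx'
      refine ⟨(z, 0), ⟨?_, ⟨le_rfl, zero_le_one⟩, (hu.mem_Icc z).1⟩, ?_⟩
      · simp only [fuzzyCut, if_pos rfl]; exact subset_closure hz
      · simp_all [Prod.map]
    have : (x, t) ∈ closure ({x' | 0 < zadeh f u x'} ×ˢ ({(0:ℝ)} : Set ℝ)) := by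
      rw [closure_prod_eq]
      exact ⟨hxc, by simpa using h0.symm⟩
    have h0' : t = 0 := h0.symm
    rw [h0']
    rw [h0'] at this
    exact closure_mono hsub this
  · -- 0 < t
    rw [mem_closure_iff_nhds]
    intro N hN
    rw [mem_nhds_prod_iff] at hN
    obtain ⟨Nx, hNx, Nt, hNt, hsub⟩ := hN
    obtain ⟨η, hη, hball⟩ := Metric.mem_nhds_iff.mp hNt
    set t' : ℝ := max (t/2) (t - η/2) with ht'
    have ht'0 : 0 < t' := lt_max_of_lt_left (by linarith)
    have ht't : t' < t := max_lt (by linarith) (by linarith)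
    have hdist : dist t' t < η := by
      rw [Real.dist_eq, abs_sub_lt_iff]
      have h1 : t - η/2 ≤ t' := le_max_right _ _
      constructor <;> linarith
    obtain ⟨z, hfz, hz⟩ := exists_of_pos_zadeh u ht'0.le (lt_of_lt_of_le ht't hle)
    refine ⟨(x, t'), hsub ⟨mem_of_mem_nhds hNx, hball hdist⟩,
      ⟨(z, t'), ⟨?_, ⟨ht'0.le, ht't.le.trans ht.2⟩, hz.le⟩, by simp [Prod.map, hfz]⟩⟩
    simp only [fuzzyCut, if_pos rfl]
    exact subset_closure (lt_of_le_of_lt ht'0.le hz)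

end aux

/-- Continuity of the Zadeh extension with respect to the sendograph uniformity `𝒰_S`:
for each `u ∈ ℱ(X)` and each basic entourage `S[U, ε]`, there are `V ∈ 𝒰` and `δ > 0` such
that the basic ball `S[V, δ](u)` is mapped into `S[U, ε](f̂ u)`. -/
theorem stmt11 {X : Type*} [UniformSpace X] {f : X → X} (hf : Continuous f) :
    ∀ u : X → ℝ, IsFuzzySet u → ∀ U ∈ 𝓤 X, ∀ ε > (0:ℝ), ∃ V ∈ 𝓤 X, ∃ δ > (0:ℝ),
      ∀ v : X → ℝ, IsFuzzySet v → SendRel V δ u v →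
        SendRel U ε (zadeh f u) (zadeh f v) := by
  intro u hu U hU ε hε
  obtain ⟨U₁, hU₁, hU₁symm, hU₁U⟩ := comp_symm_mem_uniformity_sets hU
  have hK : IsCompact (fuzzyCut u 0) := by simpa [fuzzyCut] using hu.compact_supp
  set V₀ : Set (X × X) := {p : X × X | p.1 ∈ fuzzyCut u 0 → (f p.1, f p.2) ∈ U₁} with hV₀def
  have hV₀ : V₀ ∈ 𝓤 X :=
    hK.uniformContinuousAt_of_continuousAt f (fun a _ => hf.continuousAt) hU₁
  have hV₀' : Prod.swap ⁻¹' V₀ ∈ 𝓤 X := mem_map.mp (tendsto_swap_uniformity hV₀)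
  refine ⟨V₀ ∩ Prod.swap ⁻¹' V₀, inter_mem hV₀ hV₀', ε/2, by linarith, ?_⟩
  intro v hv hSend
  obtain ⟨h1, h2⟩ := hSend
  -- a helper: the set {q | (q.1, y) ∈ U₁ ∧ |q.2 - s| < ε/2} is a nbhd of (y, s)
  have hnbhd : ∀ p : X × ℝ, {q : X × ℝ | (q.1, p.1) ∈ U₁ ∧ |q.2 - p.2| < ε/2} ∈ 𝓝 p := by
    intro p
    have hx : {y : X | (y, p.1) ∈ U₁} ∈ 𝓝 p.1 := by
      have : {y : X | (p.1, y) ∈ U₁} ∈ 𝓝 p.1 := UniformSpace.ball_mem_nhds p.1 hU₁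
      refine Filter.mem_of_superset this fun y hy => ?_
      exact hU₁symm.symm _ _ hy
    have ht : {s : ℝ | |s - p.2| < ε/2} ∈ 𝓝 p.2 := by
      have : Metric.ball p.2 (ε/2) ∈ 𝓝 p.2 := Metric.ball_mem_nhds _ (by linarith)
      simpa only [Metric.ball, Real.dist_eq] using this
    have := prod_mem_nhds hx ht
    rw [← @Prod.mk.eta _ _ p]
    exact Filter.mem_of_superset this fun q hq => ⟨hq.1, hq.2⟩
  constructor
  · -- send (zadeh f u) ⊆ ballImage (prodEnt U ε) (send (zadeh f v))
    intro p hp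
    have hp' := send_zadeh_subset u hu hp
    obtain ⟨p', hp'N, ⟨⟨a, t⟩, haT, rfl⟩⟩ :=
      mem_closure_iff_nhds.mp hp' _ (hnbhd p)
    obtain ⟨⟨b, s⟩, hbS, hVab, hst⟩ := h1 haT
    refine ⟨(f b, s), image_send_subset hf v hv ⟨(b, s), hbS, rfl⟩, ?_, ?_⟩
    · -- (f b, p.1) ∈ U
      have hab : (a, b) ∈ V₀ := hVab.2
      have hfab : (f a, f b) ∈ U₁ := hab haT.1
      exact hU₁U ⟨f a, hU₁symm.symm _ _ hfab, hp'N.1⟩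
    · have := hp'N.2
      simp only [Prod.map, id] at this ⊢
      rw [abs_sub_lt_iff] at *
      obtain ⟨hst1, hst2⟩ := hst
      constructor <;> linarith [this.1, this.2]
  · intro p hp
    have hp' := send_zadeh_subset v hv hp
    obtain ⟨p', hp'N, ⟨⟨b, s⟩, hbS, rfl⟩⟩ :=
      mem_closure_iff_nhds.mp hp' _ (hnbhd p)
    obtain ⟨⟨a, t⟩, haT, hVab, hst⟩ := h2 hbS
    refine ⟨(f a, t), image_send_subset hf u hu ⟨(a, t), haT, rfl⟩, ?_, ?_⟩
    · have hfab : (f a, f b) ∈ U₁ := hVab.1 haT.1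
      exact hU₁U ⟨f b, hfab, hp'N.1⟩
    · have := hp'N.2
      simp only [Prod.map, id] at this ⊢
      rw [abs_sub_lt_iff] at *
      obtain ⟨hst1, hst2⟩ := hst
      constructor <;> linarith [this.1, this.2]
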